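/- Consider m parallel links with affine latencies sorted by strictly increasing constants b₁ < ... < b_m, and an optimal flow f* for rate r with KKT multiplier μ (2aᵢfᵢ* + bᵢ = μ on used links). Let k be the largest used link index. Then ℓ_k(f_k*) ≥ ℓᵢ(fᵢ*) for all used i, i.e., the used link with the largest constant term has the maximum latency under the optimal flow. Moreover, if some used link j has a_j = 0, then j = k. -/
import Mathlib


/-- m parallel links with affine latencies ℓᵢ(x) = aᵢx + bᵢ (aᵢ, bᵢ ≥ 0), constants bᵢ
strictly increasing, and an optimal flow f* for rate r whose used links are exactly
{i : i ≤ k}, with KKT multiplier μ (2aᵢfᵢ* + bᵢ = μ for i ≤ k). Then link k has the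
maximum latency among used links, and if a used link j has aⱼ = 0 then j = k. -/
theorem stmt9 (m : ℕ) (a b f : Fin m → ℝ) (r : ℝ)
    (ha : ∀ i, 0 ≤ a i) (hbmono : StrictMono b) (hb : ∀ i, 0 ≤ b i)
    (hf : ∀ i, 0 ≤ f i) (hsum : ∑ i, f i = r)
    (k : Fin m) (hused : ∀ i, 0 < f i ↔ i ≤ k)
    (μ : ℝ) (hμ : ∀ i, i ≤ k → 2 * a i * f i + b i = μ) :
    (∀ i, 0 < f i → a i * f i + b i ≤ a k * f k + b k) ∧
    (∀ j, 0 < f j → a j = 0 → j = k) := by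
  have hkk : k ≤ k := le_refl k
  have hμk := hμ k hkk
  constructor
  · intro i hi
    have hik : i ≤ k := (hused i).1 hi
    have hμi := hμ i hik
    have hbik : b i ≤ b k := hbmono.monotone hik
    have h1 : 2 * (a k * f k) ≤ 2 * (a i * f i) := by nlinarith
    nlinarith
  · intro j hj haj
    have hjk : j ≤ k := (hused j).1 hj
    have hμj := hμ j hjk
    rcases lt_or_eq_of_le hjk with h | h
    · exfalso
      have hbjk : b j < b k := hbmono h
      have hak := ha k
      have hfk := hf k
      nlinarith
    · exact h
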